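/- Consider the constant-product AMM with reserves b₀, b₁ > 0 whose mempool contains exactly one honest transaction tx sending v > 0 units of τ₀ with minimum-output constraint vmin = 0 (and the honest sender owns v units of τ₀). Then for every ε > 0 there is a list of moves tr with gainMoves σ tr + ε ≥ extractable(σ) + v·pr₀; consequently MEVsup σ (extractable(σ) + v·pr₀) holds while MEV does not exist at σ. The witnessing trace, parameterised by x > 0, is: balance the AMM, adversary-swap x units of τ₀ in, execute tx, then re-balance; its gain is extractable(σ) + pr₀·v − pr₁·b̄₀·b̄₁·v / ((b̄₀+x+v)·(b̄₀+x)), where (b̄₀, b̄₁) are the balanced reserves, and this tends to extractable(σ) + pr₀·v as x → ∞. -/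

import Mathlib

open scoped NNReal

/-! A constant-product AMM over two token types τ₀, τ₁ with fixed positive
prices pr₀, pr₁. A swap sending `v > 0` units of token τ returns
`v · r' / (r + v)` units of the other token, where `r`, `r'` are the input and
output reserves, so the product of reserves is invariant. Honest swaps come
from the mempool and carry a minimum-output constraint `vmin`; the adversary
(with unbounded funds) can craft arbitrary swaps. -/

inductive Participant where
  | Hon : String → Participant
  | Adv : Participant
deriving DecidableEq

inductive Token where
  | τ₀ : Token
  | τ₁ : Token
deriving DecidableEq

/-- The other token type. -/
def Token.other : Token → Token
  | .τ₀ => .τ₁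
  | .τ₁ => .τ₀

abbrev TxId := ℕ

/-- A `swap` transaction: participant `P` sends `v > 0` units of token `τ`,
requiring at least `vmin` units of the other token in exchange. -/
structure Tx where
  P : Participant
  v : ℝ
  v_pos : 0 < v
  τ : Token
  vmin : ℝ

/-- The honest part of the system state: AMM reserves `bal`, cumulative honest
wallet `wal`, and the mempool. -/
structure AMMState where
  bal : Token → ℝ≥0
  wal : Token → ℝ≥0
  mempool : List (TxId × Tx)

/-- System state: adversary wallet plus honest state. -/
structure AMMSys where
  Δ : Token → ℝ
  s : AMMState

/-- Semantics of a swap of `v` units of `τin` by `P` with minimum output `vmin`. -/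
noncomputable def swapSem (P : Participant) (v : ℝ) (τin : Token) (vmin : ℝ)
    (σ : AMMSys) : Option AMMSys :=
  let τout := τin.other
  let rin : ℝ := σ.s.bal τin
  let rout : ℝ := σ.s.bal τout
  let x : ℝ := v * rout / (rin + v)
  if 0 < v ∧ (P = .Adv ∨ v ≤ (σ.s.wal τin : ℝ)) ∧ vmin ≤ x ∧ x < rout then
    some { Δ := if P = .Adv
                then fun τ => σ.Δ τ + (if τ = τout then x else 0)
                                    - (if τ = τin then v else 0)
                else σ.Δ
         , s := { bal := fun τ => if τ = τin then σ.s.bal τin + v.toNNReal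
                                  else σ.s.bal τout - x.toNNReal
                , wal := if P = .Adv then σ.s.wal
                         else fun τ => σ.s.wal τ + (if τ = τout then x.toNNReal else 0)
                                               - (if τ = τin then v.toNNReal else 0)
                , mempool := σ.s.mempool } }
  else none

/-- Adversarial moves: craft an adversary-signed swap, or execute a mempool
transaction. -/
inductive Move where
  | adv : (v : ℝ) → 0 < v → (τ : Token) → (vmin : ℝ) → Move
  | mempool : TxId → Move

/-- Semantics of adversarial moves. A successfully executed mempool transaction
is removed from the mempool. -/
noncomputable def semMove (σ : AMMSys) : Move → Option AMMSys
  | .adv v _ τ vmin => swapSem .Adv v τ vmin σ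
  | .mempool id =>
    match σ.s.mempool.find? (fun p => p.1 == id) with
    | none => none
    | some (_, tx) =>
      match swapSem tx.P tx.v tx.τ tx.vmin σ with
      | none => none
      | some σ' =>
        some { Δ := σ'.Δ
             , s := { bal := σ'.s.bal, wal := σ'.s.wal
                    , mempool := σ.s.mempool.filter (fun p => p.1 != id) } }

/-- Composed effect of a list of moves (failing moves are skipped). -/
noncomputable def semMoves (σ : AMMSys) : List Move → AMMSys
  | [] => σ
  | m :: ms =>
    match semMove σ m with
    | none => semMoves σ ms
    | some σ' => semMoves σ' ms

/-- Adversarial gain of a list of moves, at token prices `pr₀`, `pr₁`. -/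
noncomputable def gainMoves (pr₀ pr₁ : ℝ) (σ : AMMSys) (tr : List Move) : ℝ :=
  pr₀ * ((semMoves σ tr).Δ .τ₀ - σ.Δ .τ₀) + pr₁ * ((semMoves σ tr).Δ .τ₁ - σ.Δ .τ₁)

/-- Maximal extractable value. -/
structure MEV (pr₀ pr₁ : ℝ) (σ : AMMSys) (v : ℝ) : Prop where
  trace_reaches_v : ∃ tr, gainMoves pr₀ pr₁ σ tr = v
  other_traces_worse : ∀ tr, gainMoves pr₀ pr₁ σ tr ≤ v

/-- Least upper bound of the extractable values. -/
structure MEVsup (pr₀ pr₁ : ℝ) (σ : AMMSys) (v : ℝ) : Prop where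
  traces_approx : ∀ ε : ℝ, 0 < ε → ∃ tr, v ≤ gainMoves pr₀ pr₁ σ tr + ε
  other_traces_worse : ∀ tr, gainMoves pr₀ pr₁ σ tr ≤ v

/-- Value extractable by rebalancing the AMM (arbitrage). -/
noncomputable def extractable (pr₀ pr₁ : ℝ) (σ : AMMSys) : ℝ :=
  (Real.sqrt (pr₀ * (σ.s.bal .τ₀ : ℝ)) - Real.sqrt (pr₁ * (σ.s.bal .τ₁ : ℝ)))^2


section MEVAux

lemma other_ne (τ : Token) : τ.other ≠ τ := by cases τ <;> simp [Token.other]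

/-- Full characterization of a successful swap. -/
lemma swap_some {P : Participant} {v : ℝ} {τin : Token} {vmin : ℝ} {σ σ' : AMMSys}
    (h : swapSem P v τin vmin σ = some σ') :
    0 < v ∧ 0 < (σ.s.bal τin : ℝ) ∧ 0 < (σ.s.bal τin.other : ℝ) ∧
    vmin ≤ v * (σ.s.bal τin.other) / (σ.s.bal τin + v) ∧
    (P = .Adv ∨ v ≤ (σ.s.wal τin : ℝ)) ∧
    ((σ'.s.bal τin : ℝ) = σ.s.bal τin + v) ∧
    ((σ'.s.bal τin.other : ℝ)
        = (σ.s.bal τin : ℝ) * (σ.s.bal τin.other) / (σ.s.bal τin + v)) ∧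
    σ'.s.mempool = σ.s.mempool ∧
    (P = .Adv → σ'.s.wal = σ.s.wal) ∧
    (P = .Adv → σ'.Δ τin = σ.Δ τin - v ∧
        σ'.Δ τin.other = σ.Δ τin.other + v * (σ.s.bal τin.other) / (σ.s.bal τin + v)) ∧
    (P ≠ .Adv → σ'.Δ = σ.Δ) := by
  unfold swapSem at h
  by_cases hc : 0 < v ∧ (P = Participant.Adv ∨ v ≤ (σ.s.wal τin : ℝ)) ∧
      vmin ≤ v * (σ.s.bal τin.other) / (σ.s.bal τin + v) ∧
      v * (σ.s.bal τin.other) / (σ.s.bal τin + v) < (σ.s.bal τin.other : ℝ)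
  swap
  · simp only [if_neg hc] at h; exact absurd h (by simp)
  simp only [if_pos hc] at h
  obtain ⟨hv, hw, hmin, hlt⟩ := hc
  set rin : ℝ := (σ.s.bal τin : ℝ) with hrin
  set rout : ℝ := (σ.s.bal τin.other : ℝ) with hrout
  set x : ℝ := v * rout / (rin + v) with hxdef
  have hrin0 : 0 ≤ rin := (σ.s.bal τin).coe_nonneg
  have hrout0 : 0 ≤ rout := (σ.s.bal τin.other).coe_nonneg
  have hx0 : 0 ≤ x := by
    apply div_nonneg (by positivity) (by linarith)
  have hroutpos : 0 < rout := lt_of_le_of_lt hx0 hlt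
  have hrinpos : 0 < rin := by
    by_contra hcon
    have : rin = 0 := le_antisymm (not_lt.mp hcon) hrin0
    rw [hxdef, this, zero_add, mul_comm, mul_div_assoc, div_self (ne_of_gt hv), mul_one] at hlt
    exact lt_irrefl _ hlt
  cases h
  refine ⟨hv, hrinpos, hroutpos, hmin, hw, ?_, ?_, rfl, ?_, ?_, ?_⟩
  · simp only [if_pos rfl, if_true]
    rw [NNReal.coe_add, Real.coe_toNNReal _ hv.le]
  · simp only [if_neg (other_ne τin)]
    have hxle : x.toNNReal ≤ σ.s.bal τin.other := by
      rw [Real.toNNReal_le_iff_le_coe]; exact hlt.le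
    rw [NNReal.coe_sub hxle, Real.coe_toNNReal _ hx0]
    rw [hxdef]
    field_simp
    ring
  · intro hP; simp only [if_pos hP]
  · intro hP
    simp only [if_pos hP]
    constructor
    · simp only [if_pos rfl, if_true, if_neg (Ne.symm (other_ne τin))]; ring
    · simp only [if_pos rfl, if_true, if_neg (other_ne τin)]; ring
  · intro hP; simp only [if_neg hP]

/-- A swap with satisfiable guards succeeds. -/
lemma swap_runs {P : Participant} {v : ℝ} {τin : Token} {vmin : ℝ} {σ : AMMSys}
    (hv : 0 < v) (hw : P = .Adv ∨ v ≤ (σ.s.wal τin : ℝ))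
    (hmin : vmin ≤ v * (σ.s.bal τin.other) / (σ.s.bal τin + v))
    (hrin : 0 < (σ.s.bal τin : ℝ)) (hrout : 0 < (σ.s.bal τin.other : ℝ)) :
    ∃ σ', swapSem P v τin vmin σ = some σ' := by
  unfold swapSem
  have hx : v * (σ.s.bal τin.other) / (σ.s.bal τin + v) < (σ.s.bal τin.other : ℝ) := by
    rw [div_lt_iff₀ (by linarith)]
    nlinarith
  rw [if_pos ⟨hv, hw, hmin, hx⟩]
  exact ⟨_, rfl⟩

lemma mempool_none {σ : AMMSys} {i : TxId} (h : σ.s.mempool = []) :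
    semMove σ (.mempool i) = none := by
  unfold semMove
  rw [h]
  rfl

lemma mempool_step {σ σ'' : AMMSys} {i id : TxId} {tx : Tx}
    (hmp : σ.s.mempool = [(id, tx)])
    (h : semMove σ (.mempool i) = some σ'') :
    ∃ σ', swapSem tx.P tx.v tx.τ tx.vmin σ = some σ' ∧
      σ''.Δ = σ'.Δ ∧ σ''.s.bal = σ'.s.bal ∧ σ''.s.wal = σ'.s.wal ∧
      σ''.s.mempool = [] := by
  unfold semMove at h
  rw [hmp] at h
  by_cases hi : (id == i) = true
  swap
  · simp only [List.find?_cons, hi] at h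
    simp at h
  simp only [List.find?_cons, hi] at h
  cases hsw : swapSem tx.P tx.v tx.τ tx.vmin σ with
  | none => rw [hsw] at h; simp at h
  | some σ' =>
    rw [hsw] at h
    simp only [Option.some.injEq] at h
    refine ⟨σ', rfl, ?_, ?_, ?_, ?_⟩ <;> rw [← h] <;>
      simp [List.filter, bne, hi]

lemma semMoves_append (σ : AMMSys) (l₁ l₂ : List Move) :
    semMoves σ (l₁ ++ l₂) = semMoves (semMoves σ l₁) l₂ := by
  induction l₁ generalizing σ with
  | nil => rfl
  | cons m ms ih =>
    simp only [List.cons_append, semMoves]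
    cases hm : semMove σ m <;> simp only [hm] <;> simp [ih]

/-- The conserved potential: adversary portfolio value plus extractable value. -/
noncomputable def W (pr₀ pr₁ : ℝ) (σ : AMMSys) : ℝ :=
  pr₀ * σ.Δ .τ₀ + pr₁ * σ.Δ .τ₁ + extractable pr₀ pr₁ σ

lemma ext_eq {pr₀ pr₁ : ℝ} (hpr₀ : 0 ≤ pr₀) (hpr₁ : 0 ≤ pr₁) (σ : AMMSys) :
    extractable pr₀ pr₁ σ
      = pr₀ * (σ.s.bal .τ₀ : ℝ) + pr₁ * (σ.s.bal .τ₁ : ℝ)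
        - 2 * Real.sqrt (pr₀ * pr₁ * ((σ.s.bal .τ₀ : ℝ) * (σ.s.bal .τ₁ : ℝ))) := by
  unfold extractable
  have h0 : (0:ℝ) ≤ pr₀ * (σ.s.bal .τ₀ : ℝ) := by positivity
  have h1 : (0:ℝ) ≤ pr₁ * (σ.s.bal .τ₁ : ℝ) := by positivity
  rw [sub_sq, Real.sq_sqrt h0, Real.sq_sqrt h1, mul_assoc, ← Real.sqrt_mul h0]
  rw [show pr₀ * (σ.s.bal .τ₀ : ℝ) * (pr₁ * (σ.s.bal .τ₁ : ℝ))
      = pr₀ * pr₁ * ((σ.s.bal .τ₀ : ℝ) * (σ.s.bal .τ₁ : ℝ)) by ring]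
  ring

lemma ext_nonneg (pr₀ pr₁ : ℝ) (σ : AMMSys) : 0 ≤ extractable pr₀ pr₁ σ :=
  sq_nonneg _

/-- Adversary swaps conserve `W` and preserve mempool, wallet, and positivity. -/
lemma W_adv_step {pr₀ pr₁ : ℝ} (hpr₀ : 0 < pr₀) (hpr₁ : 0 < pr₁)
    {v : ℝ} {τin : Token} {vmin : ℝ} {σ σ' : AMMSys}
    (h : swapSem .Adv v τin vmin σ = some σ') :
    W pr₀ pr₁ σ' = W pr₀ pr₁ σ ∧ σ'.s.mempool = σ.s.mempool ∧ σ'.s.wal = σ.s.wal ∧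
    0 < (σ'.s.bal .τ₀ : ℝ) ∧ 0 < (σ'.s.bal .τ₁ : ℝ) := by
  obtain ⟨hv, hrin, hrout, -, -, hbin, hbout, hmp, hwal, hΔ, -⟩ := swap_some h
  obtain ⟨hΔin, hΔout⟩ := hΔ rfl
  cases τin with
  | τ₀ =>
    simp only [Token.other] at hbin hbout hΔin hΔout hrout
    have hne : (0:ℝ) < (σ.s.bal .τ₀ : ℝ) + v := by linarith
    have hprod : (σ'.s.bal .τ₀ : ℝ) * (σ'.s.bal .τ₁ : ℝ)
        = (σ.s.bal .τ₀ : ℝ) * (σ.s.bal .τ₁ : ℝ) := by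
      rw [hbin, hbout]; field_simp
    refine ⟨?_, hmp, hwal rfl, by rw [hbin]; linarith,
      by rw [hbout]; exact div_pos (mul_pos hrin hrout) hne⟩
    unfold W
    rw [ext_eq hpr₀.le hpr₁.le, ext_eq hpr₀.le hpr₁.le, hprod, hbin, hbout, hΔin, hΔout]
    field_simp
    ring
  | τ₁ =>
    simp only [Token.other] at hbin hbout hΔin hΔout hrout
    have hne : (0:ℝ) < (σ.s.bal .τ₁ : ℝ) + v := by linarith
    have hprod : (σ'.s.bal .τ₀ : ℝ) * (σ'.s.bal .τ₁ : ℝ)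
        = (σ.s.bal .τ₀ : ℝ) * (σ.s.bal .τ₁ : ℝ) := by
      rw [hbin, hbout]; field_simp
    refine ⟨?_, hmp, hwal rfl,
      by rw [hbout]; exact div_pos (mul_pos hrin hrout) hne, by rw [hbin]; linarith⟩
    unfold W
    rw [ext_eq hpr₀.le hpr₁.le, ext_eq hpr₀.le hpr₁.le, hprod, hbin, hbout, hΔin, hΔout]
    field_simp
    ring

/-- An honest swap of `v` units of τ₀ increases `W` by `pr₀·v` minus the
price-value of the swap output. -/
lemma W_hon_step {pr₀ pr₁ : ℝ} (hpr₀ : 0 < pr₀) (hpr₁ : 0 < pr₁)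
    {P : Participant} {v : ℝ} {vmin : ℝ} {σ σ' : AMMSys} (hP : P ≠ .Adv)
    (h : swapSem P v .τ₀ vmin σ = some σ') :
    W pr₀ pr₁ σ' = W pr₀ pr₁ σ + pr₀ * v
        - pr₁ * (v * (σ.s.bal .τ₁ : ℝ) / ((σ.s.bal .τ₀ : ℝ) + v)) ∧
    0 < v * (σ.s.bal .τ₁ : ℝ) / ((σ.s.bal .τ₀ : ℝ) + v) ∧
    σ'.s.mempool = σ.s.mempool ∧
    ((σ'.s.bal .τ₀ : ℝ) = σ.s.bal .τ₀ + v) ∧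
    ((σ'.s.bal .τ₁ : ℝ)
        = (σ.s.bal .τ₀ : ℝ) * (σ.s.bal .τ₁ : ℝ) / ((σ.s.bal .τ₀ : ℝ) + v)) ∧
    0 < (σ'.s.bal .τ₀ : ℝ) ∧ 0 < (σ'.s.bal .τ₁ : ℝ) := by
  obtain ⟨hv, hrin, hrout, -, -, hbin, hbout, hmp, -, -, hΔ⟩ := swap_some h
  simp only [Token.other] at hbin hbout hrout
  have hΔ' := hΔ hP
  have hne : (0:ℝ) < (σ.s.bal .τ₀ : ℝ) + v := by linarith
  have hxpos : 0 < v * (σ.s.bal .τ₁ : ℝ) / ((σ.s.bal .τ₀ : ℝ) + v) :=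
    div_pos (mul_pos hv hrout) hne
  refine ⟨?_, hxpos, hmp, hbin, hbout, by rw [hbin]; linarith,
    by rw [hbout]; exact div_pos (mul_pos hrin hrout) hne⟩
  have hprod : (σ'.s.bal .τ₀ : ℝ) * (σ'.s.bal .τ₁ : ℝ)
      = (σ.s.bal .τ₀ : ℝ) * (σ.s.bal .τ₁ : ℝ) := by
    rw [hbin, hbout]; field_simp
  unfold W
  rw [ext_eq hpr₀.le hpr₁.le, ext_eq hpr₀.le hpr₁.le, hprod, hbin, hbout, hΔ']
  field_simp
  ring

/-- Price-value still locked in the mempool. -/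
noncomputable def M (pr₀ : ℝ) (tx : Tx) (σ : AMMSys) : ℝ :=
  match σ.s.mempool with
  | [] => 0
  | _ => pr₀ * tx.v

lemma W_congr {pr₀ pr₁ : ℝ} {σ σ' : AMMSys} (hΔ : σ'.Δ = σ.Δ)
    (hbal : σ'.s.bal = σ.s.bal) : W pr₀ pr₁ σ' = W pr₀ pr₁ σ := by
  unfold W extractable
  rw [hΔ, hbal]

/-- One adversarial move cannot increase `W + M`, and executing the mempool
transaction strictly decreases it. -/
lemma step_bound {pr₀ pr₁ : ℝ} (hpr₀ : 0 < pr₀) (hpr₁ : 0 < pr₁)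
    {id : TxId} {tx : Tx} (hτ : tx.τ = .τ₀) (hhon : tx.P ≠ .Adv)
    {σ σ' : AMMSys} {m : Move} (hm : semMove σ m = some σ')
    (hInv : σ.s.mempool = [(id, tx)] ∨ σ.s.mempool = []) :
    (σ'.s.mempool = [(id, tx)] ∨ σ'.s.mempool = []) ∧
    W pr₀ pr₁ σ' + M pr₀ tx σ' ≤ W pr₀ pr₁ σ + M pr₀ tx σ ∧
    (σ'.s.mempool = [] → σ.s.mempool ≠ [] →
      W pr₀ pr₁ σ' + M pr₀ tx σ' < W pr₀ pr₁ σ + M pr₀ tx σ) := by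
  cases m with
  | adv v hv τ vmin =>
    obtain ⟨hW, hmp, -, -, -⟩ := W_adv_step hpr₀ hpr₁ (hm : swapSem .Adv v τ vmin σ = some σ')
    have hM : M pr₀ tx σ' = M pr₀ tx σ := by unfold M; rw [hmp]
    refine ⟨by rw [hmp]; exact hInv, le_of_eq (by rw [hW, hM]), fun h1 h2 => absurd (hmp ▸ h1) h2⟩
  | mempool i =>
    rcases hInv with hmp | hmp
    swap
    · rw [mempool_none hmp] at hm; exact absurd hm (by simp)
    obtain ⟨s', hsw, hΔ, hbal, -, hmp'⟩ := mempool_step hmp hm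
    rw [hτ] at hsw
    obtain ⟨hW, hx, -, -, -, -, -⟩ := W_hon_step hpr₀ hpr₁ hhon hsw
    have hWσ' : W pr₀ pr₁ σ' = W pr₀ pr₁ s' := W_congr hΔ hbal
    have hMσ' : M pr₀ tx σ' = 0 := by simp [M, hmp']
    have hMσ : M pr₀ tx σ = pr₀ * tx.v := by simp [M, hmp]
    have hstrict : W pr₀ pr₁ σ' + M pr₀ tx σ' < W pr₀ pr₁ σ + M pr₀ tx σ := by
      rw [hWσ', hMσ', hMσ, hW]
      nlinarith [mul_pos hpr₁ hx]
    exact ⟨Or.inr hmp', hstrict.le, fun _ _ => hstrict⟩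

lemma moves_bound {pr₀ pr₁ : ℝ} (hpr₀ : 0 < pr₀) (hpr₁ : 0 < pr₁)
    {id : TxId} {tx : Tx} (hτ : tx.τ = .τ₀) (hhon : tx.P ≠ .Adv) :
    ∀ (tr : List Move) (σ : AMMSys),
      (σ.s.mempool = [(id, tx)] ∨ σ.s.mempool = []) →
      ((semMoves σ tr).s.mempool = [(id, tx)] ∨ (semMoves σ tr).s.mempool = []) ∧
      W pr₀ pr₁ (semMoves σ tr) + M pr₀ tx (semMoves σ tr)
        ≤ W pr₀ pr₁ σ + M pr₀ tx σ ∧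
      ((semMoves σ tr).s.mempool = [] → σ.s.mempool ≠ [] →
        W pr₀ pr₁ (semMoves σ tr) + M pr₀ tx (semMoves σ tr)
          < W pr₀ pr₁ σ + M pr₀ tx σ) := by
  intro tr
  induction tr with
  | nil => exact fun σ hInv => ⟨hInv, le_rfl, fun h1 h2 => absurd h1 h2⟩
  | cons m ms ih =>
    intro σ hInv
    show ((semMoves σ (m :: ms)).s.mempool = _ ∨ _) ∧ _
    unfold semMoves
    cases hm : semMove σ m with
    | none => exact ih σ hInv
    | some σ'' =>
      obtain ⟨hInv'', hle'', hlt''⟩ := step_bound hpr₀ hpr₁ hτ hhon hm hInv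
      obtain ⟨hInvf, hlef, hltf⟩ := ih σ'' hInv''
      refine ⟨hInvf, le_trans hlef hle'', fun h1 h2 => ?_⟩
      by_cases hmid : σ''.s.mempool = []
      · exact lt_of_le_of_lt hlef (hlt'' hmid h2)
      · exact lt_of_lt_of_le (hltf h1 hmid) hle''

/-- Every trace gains strictly less than `extractable σ + v·pr₀`. -/
lemma gain_lt {pr₀ pr₁ : ℝ} (hpr₀ : 0 < pr₀) (hpr₁ : 0 < pr₁)
    {id : TxId} {tx : Tx} (hτ : tx.τ = .τ₀) (hhon : tx.P ≠ .Adv)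
    {σ : AMMSys} (hmp : σ.s.mempool = [(id, tx)]) (tr : List Move) :
    gainMoves pr₀ pr₁ σ tr < extractable pr₀ pr₁ σ + tx.v * pr₀ := by
  obtain ⟨hInvf, hlef, hltf⟩ := moves_bound hpr₀ hpr₁ hτ hhon tr σ (Or.inl hmp)
  set f := semMoves σ tr with hf
  have hMσ : M pr₀ tx σ = pr₀ * tx.v := by simp [M, hmp]
  have hgain : gainMoves pr₀ pr₁ σ tr
      = (W pr₀ pr₁ f - extractable pr₀ pr₁ f) - (W pr₀ pr₁ σ - extractable pr₀ pr₁ σ) := by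
    unfold gainMoves W
    ring
  have hvpos : 0 < pr₀ * tx.v := mul_pos hpr₀ tx.v_pos
  have hef : 0 ≤ extractable pr₀ pr₁ f := ext_nonneg pr₀ pr₁ f
  by_cases hfe : f.s.mempool = []
  · have := hltf hfe (by rw [hmp]; simp)
    have hMf : M pr₀ tx f = 0 := by simp [M, hfe]
    rw [hMf, hMσ] at this
    rw [hgain]; linarith
  · have hMf : M pr₀ tx f = pr₀ * tx.v := by
      rcases hInvf with h | h
      · simp [M, h]
      · exact absurd h hfe
    rw [hMf, hMσ] at hlef
    rw [hgain]; linarith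

lemma sqrt_bal_facts {pr₀ pr₁ k : ℝ} (hpr₀ : 0 < pr₀) (hpr₁ : 0 < pr₁) (hk : 0 < k) :
    0 < Real.sqrt (pr₁ * k / pr₀) ∧ 0 < Real.sqrt (pr₀ * k / pr₁) ∧
    Real.sqrt (pr₁ * k / pr₀) * Real.sqrt (pr₀ * k / pr₁) = k ∧
    pr₀ * Real.sqrt (pr₁ * k / pr₀) = pr₁ * Real.sqrt (pr₀ * k / pr₁) := by
  have e : ∀ a b : ℝ, 0 < a → 0 < b →
      a * Real.sqrt (b * k / a) = Real.sqrt (a * b * k) := by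
    intro a b ha hb
    rw [show a * Real.sqrt (b * k / a) = Real.sqrt (a ^ 2) * Real.sqrt (b * k / a) by
        rw [Real.sqrt_sq ha.le],
      ← Real.sqrt_mul (sq_nonneg a)]
    congr 1
    field_simp
  refine ⟨Real.sqrt_pos.mpr (by positivity), Real.sqrt_pos.mpr (by positivity), ?_, ?_⟩
  · rw [← Real.sqrt_mul (by positivity),
      show pr₁ * k / pr₀ * (pr₀ * k / pr₁) = k ^ 2 by field_simp,
      Real.sqrt_sq hk.le]
  · rw [e pr₀ pr₁ hpr₀ hpr₁, e pr₁ pr₀ hpr₁ hpr₀, show pr₁ * pr₀ * k = pr₀ * pr₁ * k by ring]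

lemma ext_balanced {pr₀ pr₁ k : ℝ} (hpr₀ : 0 < pr₀) (hpr₁ : 0 < pr₁) (hk : 0 < k)
    {σ : AMMSys} (h0 : (σ.s.bal .τ₀ : ℝ) = Real.sqrt (pr₁ * k / pr₀))
    (h1 : (σ.s.bal .τ₁ : ℝ) = Real.sqrt (pr₀ * k / pr₁)) :
    extractable pr₀ pr₁ σ = 0 := by
  obtain ⟨-, -, -, he⟩ := sqrt_bal_facts hpr₀ hpr₁ hk
  unfold extractable
  rw [h0, h1, he, sub_self]
  simp

/-- The AMM can always be rebalanced by at most one adversary swap, conserving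
`W`, mempool and honest wallets. -/
lemma rebalance {pr₀ pr₁ : ℝ} (hpr₀ : 0 < pr₀) (hpr₁ : 0 < pr₁) (σ : AMMSys)
    (hb₀ : 0 < (σ.s.bal .τ₀ : ℝ)) (hb₁ : 0 < (σ.s.bal .τ₁ : ℝ)) :
    ∃ tr : List Move,
      W pr₀ pr₁ (semMoves σ tr) = W pr₀ pr₁ σ ∧
      (semMoves σ tr).s.mempool = σ.s.mempool ∧
      (semMoves σ tr).s.wal = σ.s.wal ∧
      ((semMoves σ tr).s.bal .τ₀ : ℝ)
          = Real.sqrt (pr₁ * ((σ.s.bal .τ₀ : ℝ) * (σ.s.bal .τ₁ : ℝ)) / pr₀) ∧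
      ((semMoves σ tr).s.bal .τ₁ : ℝ)
          = Real.sqrt (pr₀ * ((σ.s.bal .τ₀ : ℝ) * (σ.s.bal .τ₁ : ℝ)) / pr₁) := by
  set b₀ : ℝ := (σ.s.bal .τ₀ : ℝ) with hb0def
  set b₁ : ℝ := (σ.s.bal .τ₁ : ℝ) with hb1def
  obtain ⟨hB₀, hB₁, hBk, hBpr⟩ := sqrt_bal_facts hpr₀ hpr₁ (mul_pos hb₀ hb₁)
  set B₀ : ℝ := Real.sqrt (pr₁ * (b₀ * b₁) / pr₀) with hB0def
  set B₁ : ℝ := Real.sqrt (pr₀ * (b₀ * b₁) / pr₁) with hB1def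
  rcases lt_trichotomy b₀ B₀ with hlt | heq | hgt
  · -- send B₀ − b₀ units of τ₀
    have hv : (0:ℝ) < B₀ - b₀ := by linarith
    obtain ⟨σ', hsw⟩ := swap_runs (P := .Adv) (v := B₀ - b₀) (τin := .τ₀) (vmin := 0)
      (σ := σ) hv (Or.inl rfl)
      (div_nonneg (by positivity) (by linarith [(σ.s.bal Token.τ₀.other).coe_nonneg]))
      hb₀ hb₁
    obtain ⟨-, -, -, -, -, hbin, hbout, -, -, -, -⟩ := swap_some hsw
    simp only [Token.other] at hbin hbout
    obtain ⟨hW, hmp, hwal, -, -⟩ := W_adv_step hpr₀ hpr₁ hsw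
    refine ⟨[Move.adv (B₀ - b₀) hv .τ₀ 0], ?_⟩
    have hrun : semMoves σ [Move.adv (B₀ - b₀) hv .τ₀ 0] = σ' := by
      unfold semMoves
      rw [show semMove σ (Move.adv (B₀ - b₀) hv .τ₀ 0) = some σ' from hsw]
      rfl
    rw [hrun]
    have h0 : (σ'.s.bal .τ₀ : ℝ) = B₀ := by rw [hbin]; ring
    have h1 : (σ'.s.bal .τ₁ : ℝ) = B₁ := by
      rw [hbout, show (σ.s.bal Token.τ₀ : ℝ) + (B₀ - b₀) = B₀ by rw [← hb0def]; ring,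
        show (σ.s.bal Token.τ₀ : ℝ) * (σ.s.bal Token.τ₁ : ℝ) = B₀ * B₁ by
          rw [← hb0def, ← hb1def, hBk]]
      exact mul_div_cancel_left₀ _ hB₀.ne'
    exact ⟨hW, hmp, hwal, h0, h1⟩
  · refine ⟨[], rfl, rfl, rfl, heq, ?_⟩
    have h2 : b₀ * B₁ = b₀ * b₁ := by
      calc b₀ * B₁ = B₀ * B₁ := by rw [heq]
        _ = b₀ * b₁ := hBk
    exact (mul_left_cancel₀ hb₀.ne' h2).symm
  · -- send B₁ − b₁ units of τ₁
    have hlt1 : b₁ < B₁ := by nlinarith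
    have hv : (0:ℝ) < B₁ - b₁ := by linarith
    obtain ⟨σ', hsw⟩ := swap_runs (P := .Adv) (v := B₁ - b₁) (τin := .τ₁) (vmin := 0)
      (σ := σ) hv (Or.inl rfl)
      (div_nonneg (by positivity) (by linarith [(σ.s.bal Token.τ₁.other).coe_nonneg]))
      hb₁ hb₀
    obtain ⟨-, -, -, -, -, hbin, hbout, -, -, -, -⟩ := swap_some hsw
    simp only [Token.other] at hbin hbout
    obtain ⟨hW, hmp, hwal, -, -⟩ := W_adv_step hpr₀ hpr₁ hsw
    refine ⟨[Move.adv (B₁ - b₁) hv .τ₁ 0], ?_⟩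
    have hrun : semMoves σ [Move.adv (B₁ - b₁) hv .τ₁ 0] = σ' := by
      unfold semMoves
      rw [show semMove σ (Move.adv (B₁ - b₁) hv .τ₁ 0) = some σ' from hsw]
      rfl
    rw [hrun]
    have h1 : (σ'.s.bal .τ₁ : ℝ) = B₁ := by rw [hbin]; ring
    have h0 : (σ'.s.bal .τ₀ : ℝ) = B₀ := by
      rw [hbout, show (σ.s.bal Token.τ₁ : ℝ) + (B₁ - b₁) = B₁ by rw [← hb1def]; ring,
        show (σ.s.bal Token.τ₁ : ℝ) * (σ.s.bal Token.τ₀ : ℝ) = B₀ * B₁ by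
          rw [← hb1def, ← hb0def, mul_comm]; exact hBk.symm]
      exact mul_div_cancel_right₀ _ hB₁.ne'
    exact ⟨hW, hmp, hwal, h0, h1⟩

/-- The sandwich trace: balance, front-run with `x`, execute the honest
transaction, re-balance; its exact gain. -/
lemma witness_gain {pr₀ pr₁ : ℝ} (hpr₀ : 0 < pr₀) (hpr₁ : 0 < pr₁) {σ : AMMSys}
    (hb₀ : 0 < (σ.s.bal .τ₀ : ℝ)) (hb₁ : 0 < (σ.s.bal .τ₁ : ℝ))
    {id : TxId} {tx : Tx} (hmp : σ.s.mempool = [(id, tx)])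
    (hτ : tx.τ = .τ₀) (hvmin : tx.vmin = 0) (hhon : tx.P ≠ .Adv)
    (howns : tx.v ≤ (σ.s.wal .τ₀ : ℝ)) (x : ℝ) (hx : 0 < x) :
    ∃ tr : List Move, gainMoves pr₀ pr₁ σ tr
      = extractable pr₀ pr₁ σ + pr₀ * tx.v
        - pr₁ * ((σ.s.bal .τ₀ : ℝ) * (σ.s.bal .τ₁ : ℝ)) * tx.v
            / ((Real.sqrt (pr₁ * ((σ.s.bal .τ₀ : ℝ) * (σ.s.bal .τ₁ : ℝ)) / pr₀) + x + tx.v)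
               * (Real.sqrt (pr₁ * ((σ.s.bal .τ₀ : ℝ) * (σ.s.bal .τ₁ : ℝ)) / pr₀) + x)) := by
  have hv := tx.v_pos
  obtain ⟨hB₀, hB₁, hBk, hBpr⟩ := sqrt_bal_facts hpr₀ hpr₁ (mul_pos hb₀ hb₁) (pr₀ := pr₀) (pr₁ := pr₁)
  set k : ℝ := (σ.s.bal .τ₀ : ℝ) * (σ.s.bal .τ₁ : ℝ) with hkdef
  have hk : 0 < k := mul_pos hb₀ hb₁
  set B₀ : ℝ := Real.sqrt (pr₁ * k / pr₀) with hB0def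
  set B₁ : ℝ := Real.sqrt (pr₀ * k / pr₁) with hB1def
  -- step 1: rebalance
  obtain ⟨tr₁, hW1, hmp1, hwal1, hbal10, hbal11⟩ := rebalance hpr₀ hpr₁ σ hb₀ hb₁
  set σ₁ := semMoves σ tr₁ with hσ₁def
  have hσ₁0 : (σ₁.s.bal .τ₀ : ℝ) = B₀ := hbal10
  have hσ₁1 : (σ₁.s.bal .τ₁ : ℝ) = B₁ := hbal11
  have hσ₁0p : 0 < (σ₁.s.bal .τ₀ : ℝ) := by rw [hσ₁0]; exact hB₀
  have hσ₁1p : 0 < (σ₁.s.bal .τ₁ : ℝ) := by rw [hσ₁1]; exact hB₁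
  -- step 2: adversary front-run with x units of τ₀
  obtain ⟨σ₂, hsw₂⟩ := swap_runs (P := .Adv) (v := x) (τin := .τ₀) (vmin := 0) (σ := σ₁)
    hx (Or.inl rfl)
    (div_nonneg (mul_nonneg hx.le (σ₁.s.bal Token.τ₀.other).coe_nonneg)
      (add_nonneg (σ₁.s.bal Token.τ₀).coe_nonneg hx.le))
    hσ₁0p hσ₁1p
  obtain ⟨-, -, -, -, -, hbin2, hbout2, -, -, -, -⟩ := swap_some hsw₂
  simp only [Token.other] at hbin2 hbout2
  obtain ⟨hW2, hmp2, hwal2, hσ₂0p, hσ₂1p⟩ := W_adv_step hpr₀ hpr₁ hsw₂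
  have hσ₂0 : (σ₂.s.bal .τ₀ : ℝ) = B₀ + x := by rw [hbin2, hσ₁0]
  have hσ₂1 : (σ₂.s.bal .τ₁ : ℝ) = k / (B₀ + x) := by
    rw [hbout2, hσ₁0, hσ₁1, hBk]
  have hmp2' : σ₂.s.mempool = [(id, tx)] := by rw [hmp2, hmp1, hmp]
  -- step 3: execute the honest transaction
  obtain ⟨s₃, hsw₃⟩ := swap_runs (P := tx.P) (v := tx.v) (τin := .τ₀) (vmin := tx.vmin)
    (σ := σ₂) hv (Or.inr (by rw [hwal2, hwal1]; exact howns))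
    (by rw [hvmin]
        exact div_nonneg (mul_nonneg hv.le (σ₂.s.bal Token.τ₀.other).coe_nonneg)
          (add_nonneg (σ₂.s.bal Token.τ₀).coe_nonneg hv.le))
    hσ₂0p hσ₂1p
  have hsw₃' : swapSem tx.P tx.v tx.τ tx.vmin σ₂ = some s₃ := by rw [hτ]; exact hsw₃
  obtain ⟨hW3, hx3, -, hb30, hb31, hs₃0p, hs₃1p⟩ := W_hon_step hpr₀ hpr₁ hhon hsw₃
  set σ₃ : AMMSys := ⟨s₃.Δ, ⟨s₃.s.bal, s₃.s.wal, []⟩⟩ with hσ₃def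
  have hm₃ : semMove σ₂ (Move.mempool id) = some σ₃ := by
    have hred : semMove σ₂ (Move.mempool id) =
        match List.find? (fun p => p.1 == id) σ₂.s.mempool with
        | none => none
        | some (_, tx) =>
          match swapSem tx.P tx.v tx.τ tx.vmin σ₂ with
          | none => none
          | some σ' =>
            some { Δ := σ'.Δ
                 , s := { bal := σ'.s.bal, wal := σ'.s.wal
                        , mempool := σ₂.s.mempool.filter (fun p => p.1 != id) } } := rfl
    rw [hred, hmp2',
      show List.find? (fun p => p.1 == id) [(id, tx)] = some (id, tx) from by simp]
    show (match swapSem tx.P tx.v tx.τ tx.vmin σ₂ with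
          | none => none
          | some σ' =>
            some { Δ := σ'.Δ
                 , s := { bal := σ'.s.bal, wal := σ'.s.wal
                        , mempool := List.filter (fun p => p.1 != id) [(id, tx)] } }) = some σ₃
    rw [hsw₃']
    simp [hσ₃def, List.filter]
  have hσ₃0 : (σ₃.s.bal .τ₀ : ℝ) = B₀ + x + tx.v := by
    show (s₃.s.bal .τ₀ : ℝ) = _
    rw [hb30, hσ₂0]
  have hσ₃1 : (σ₃.s.bal .τ₁ : ℝ) = k / (B₀ + x + tx.v) := by
    show (s₃.s.bal .τ₁ : ℝ) = _
    rw [hb31, hσ₂0, hσ₂1]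
    congr 1
    field_simp
  have hσ₃0p : 0 < (σ₃.s.bal .τ₀ : ℝ) := by rw [hσ₃0]; positivity
  have hσ₃1p : 0 < (σ₃.s.bal .τ₁ : ℝ) := by rw [hσ₃1]; positivity
  have hW3' : W pr₀ pr₁ σ₃ = W pr₀ pr₁ σ + pr₀ * tx.v
      - pr₁ * (tx.v * (k / (B₀ + x)) / (B₀ + x + tx.v)) := by
    have : W pr₀ pr₁ σ₃ = W pr₀ pr₁ s₃ := W_congr rfl rfl
    rw [this, hW3, hW2, hW1, hσ₂0, hσ₂1]
  -- step 4: final rebalance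
  obtain ⟨tr₂, hW4, hmp4, hwal4, hbal40, hbal41⟩ := rebalance hpr₀ hpr₁ σ₃ hσ₃0p hσ₃1p
  set σ₄ := semMoves σ₃ tr₂ with hσ₄def
  have hk₃ : (σ₃.s.bal .τ₀ : ℝ) * (σ₃.s.bal .τ₁ : ℝ) = k := by
    rw [hσ₃0, hσ₃1]
    field_simp
  rw [hk₃] at hbal40 hbal41
  have hext4 : extractable pr₀ pr₁ σ₄ = 0 := ext_balanced hpr₀ hpr₁ hk hbal40 hbal41
  -- the full trace
  refine ⟨tr₁ ++ (Move.adv x hx .τ₀ 0 :: Move.mempool id :: tr₂), ?_⟩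
  have hrun : semMoves σ (tr₁ ++ (Move.adv x hx .τ₀ 0 :: Move.mempool id :: tr₂)) = σ₄ := by
    rw [semMoves_append, ← hσ₁def]
    show (match semMove σ₁ (Move.adv x hx .τ₀ 0) with
          | none => semMoves σ₁ (Move.mempool id :: tr₂)
          | some σ' => semMoves σ' (Move.mempool id :: tr₂)) = σ₄
    rw [show semMove σ₁ (Move.adv x hx .τ₀ 0) = some σ₂ from hsw₂]
    show (match semMove σ₂ (Move.mempool id) with
          | none => semMoves σ₂ tr₂
          | some σ' => semMoves σ' tr₂) = σ₄
    rw [hm₃]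
  rw [show gainMoves pr₀ pr₁ σ (tr₁ ++ (Move.adv x hx .τ₀ 0 :: Move.mempool id :: tr₂))
      = (W pr₀ pr₁ σ₄ - extractable pr₀ pr₁ σ₄)
        - (W pr₀ pr₁ σ - extractable pr₀ pr₁ σ) by
    unfold gainMoves W
    rw [hrun]
    ring]
  rw [hW4, hext4, hW3',
    show pr₁ * (tx.v * (k / (B₀ + x)) / (B₀ + x + tx.v))
      = pr₁ * k * tx.v / ((B₀ + x + tx.v) * (B₀ + x)) by
    rw [div_mul_eq_div_div_swap]
    field_simp]
  ring

end MEVAux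

/-- If the mempool contains exactly one honest swap of `v > 0` units of τ₀ with
minimum-output constraint `vmin = 0` (and the honest sender owns the `v` units),
then the adversary can gain arbitrarily close to `extractable σ + v·pr₀`;
consequently `MEVsup σ (extractable σ + v·pr₀)` holds while the MEV does not
exist at `σ`. Moreover, for every `x > 0` there is a witnessing trace
(balance the AMM, adversary-swap `x` units of τ₀ in, execute the mempool
transaction, re-balance) whose gain is
`extractable σ + pr₀·v − pr₁·b̄₀·b̄₁·v / ((b̄₀+x+v)·(b̄₀+x))`,
where `(b̄₀, b̄₁)` are the balanced reserves. -/
theorem MEVsup_singleton_vmin_zero (pr₀ pr₁ : ℝ)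
    (hpr₀ : 0 < pr₀) (hpr₁ : 0 < pr₁) (σ : AMMSys)
    (hb₀ : 0 < σ.s.bal .τ₀) (hb₁ : 0 < σ.s.bal .τ₁)
    (id : TxId) (tx : Tx)
    (hmp : σ.s.mempool = [(id, tx)])
    (hτ : tx.τ = .τ₀) (hvmin : tx.vmin = 0) (hhon : tx.P ≠ .Adv)
    (howns : tx.v ≤ (σ.s.wal .τ₀ : ℝ)) :
    -- the balanced reserves:
    let b₀ : ℝ := σ.s.bal .τ₀
    let b₁ : ℝ := σ.s.bal .τ₁
    let bbar₀ : ℝ := Real.sqrt (pr₁ * b₀ * b₁ / pr₀)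
    let bbar₁ : ℝ := Real.sqrt (pr₀ * b₀ * b₁ / pr₁)
    -- traces gaining arbitrarily close to the bound
    (∀ ε : ℝ, 0 < ε → ∃ tr : List Move,
      extractable pr₀ pr₁ σ + tx.v * pr₀ ≤ gainMoves pr₀ pr₁ σ tr + ε) ∧
    -- MEVsup holds with that bound
    MEVsup pr₀ pr₁ σ (extractable pr₀ pr₁ σ + tx.v * pr₀) ∧
    -- but MEV does not exist
    (¬ ∃ v : ℝ, MEV pr₀ pr₁ σ v) ∧
    -- the witnessing trace, parameterised by x > 0, and its exact gain
    (∀ x : ℝ, 0 < x → ∃ tr : List Move,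
      gainMoves pr₀ pr₁ σ tr
        = extractable pr₀ pr₁ σ + pr₀ * tx.v
          - pr₁ * bbar₀ * bbar₁ * tx.v / ((bbar₀ + x + tx.v) * (bbar₀ + x))) := by
  intro b₀ b₁ bbar₀ bbar₁
  have hb₀' : 0 < (σ.s.bal .τ₀ : ℝ) := hb₀
  have hb₁' : 0 < (σ.s.bal .τ₁ : ℝ) := hb₁
  have hk : 0 < (σ.s.bal .τ₀ : ℝ) * (σ.s.bal .τ₁ : ℝ) := mul_pos hb₀' hb₁'
  obtain ⟨hB₀, hB₁, hBk, -⟩ := sqrt_bal_facts hpr₀ hpr₁ hk (pr₀ := pr₀) (pr₁ := pr₁)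
  have hbar0 : bbar₀
      = Real.sqrt (pr₁ * ((σ.s.bal .τ₀ : ℝ) * (σ.s.bal .τ₁ : ℝ)) / pr₀) := by
    show Real.sqrt (pr₁ * (σ.s.bal .τ₀ : ℝ) * (σ.s.bal .τ₁ : ℝ) / pr₀) = _
    congr 1
    ring
  have hbar1 : bbar₁
      = Real.sqrt (pr₀ * ((σ.s.bal .τ₀ : ℝ) * (σ.s.bal .τ₁ : ℝ)) / pr₁) := by
    show Real.sqrt (pr₀ * (σ.s.bal .τ₀ : ℝ) * (σ.s.bal .τ₁ : ℝ) / pr₁) = _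
    congr 1
    ring
  have hbar0p : 0 < bbar₀ := by rw [hbar0]; exact hB₀
  have hprod : bbar₀ * bbar₁ = (σ.s.bal .τ₀ : ℝ) * (σ.s.bal .τ₁ : ℝ) := by
    rw [hbar0, hbar1]; exact hBk
  -- part 4: exact witness gain
  have part4 : ∀ x : ℝ, 0 < x → ∃ tr : List Move,
      gainMoves pr₀ pr₁ σ tr
        = extractable pr₀ pr₁ σ + pr₀ * tx.v
          - pr₁ * bbar₀ * bbar₁ * tx.v / ((bbar₀ + x + tx.v) * (bbar₀ + x)) := by
    intro x hx
    obtain ⟨tr, htr⟩ := witness_gain hpr₀ hpr₁ hb₀' hb₁' hmp hτ hvmin hhon howns x hx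
    refine ⟨tr, htr.trans ?_⟩
    rw [← hbar0, ← hprod]
    ring
  -- part 1: traces approximating the bound
  have part1 : ∀ ε : ℝ, 0 < ε → ∃ tr : List Move,
      extractable pr₀ pr₁ σ + tx.v * pr₀ ≤ gainMoves pr₀ pr₁ σ tr + ε := by
    intro ε hε
    have hv := tx.v_pos
    have hC : 0 < pr₁ * bbar₀ * bbar₁ * tx.v := by
      have hbar1p : 0 < bbar₁ := by rw [hbar1]; exact hB₁
      positivity
    set x : ℝ := max 1 (pr₁ * bbar₀ * bbar₁ * tx.v / ε) with hxdef
    have hx1 : (1:ℝ) ≤ x := le_max_left _ _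
    have hx2 : pr₁ * bbar₀ * bbar₁ * tx.v / ε ≤ x := le_max_right _ _
    have hx0 : (0:ℝ) < x := lt_of_lt_of_le one_pos hx1
    obtain ⟨tr, htr⟩ := part4 x hx0
    refine ⟨tr, ?_⟩
    rw [htr]
    have hD : x ≤ (bbar₀ + x + tx.v) * (bbar₀ + x) := by nlinarith
    have hT : pr₁ * bbar₀ * bbar₁ * tx.v / ((bbar₀ + x + tx.v) * (bbar₀ + x))
        ≤ pr₁ * bbar₀ * bbar₁ * tx.v / x := by
      gcongr
    have hTx : pr₁ * bbar₀ * bbar₁ * tx.v / x ≤ ε := by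
      rw [div_le_iff₀ hx0]
      have := (div_le_iff₀ hε).mp hx2
      linarith
    linarith
  have hlt := fun tr => gain_lt hpr₀ hpr₁ hτ hhon hmp tr
  have hnomev : ¬ ∃ v : ℝ, MEV pr₀ pr₁ σ v := by
    rintro ⟨v, hv⟩
    obtain ⟨tr0, htr0⟩ := hv.trace_reaches_v
    have h1 : v < extractable pr₀ pr₁ σ + tx.v * pr₀ := htr0 ▸ hlt tr0
    have h2 : extractable pr₀ pr₁ σ + tx.v * pr₀ ≤ v := by
      apply le_of_forall_pos_le_add
      intro ε hε
      obtain ⟨tr, htr⟩ := part1 ε hε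
      calc extractable pr₀ pr₁ σ + tx.v * pr₀ ≤ gainMoves pr₀ pr₁ σ tr + ε := htr
        _ ≤ v + ε := by linarith [hv.other_traces_worse tr]
    linarith
  exact ⟨part1, ⟨part1, fun tr => (hlt tr).le⟩, hnomev, part4⟩
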